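/- Let H_1 be the graph on n ≥ 5 vertices obtained from a triangle by attaching n − 3 pendant edges to one fixed vertex of the triangle. Then tpc(H_1) = n − 2. -/

import Mathlib

/-- Interleave two lists, starting with the first. -/
def List.interleaveAlt {α : Type*} : List α → List α → List α
  | [], ys => ys
  | x :: xs, ys => x :: List.interleaveAlt ys xs
termination_by xs ys => xs.length + ys.length

namespace SimpleGraph

variable {V : Type*} {α : Type*} {G : SimpleGraph V}

/-- The sequence of colors `cE e₀, cV v₁, cE e₁, cV v₂, …, cE e_{m-1}` of the edges and
internal vertices of a walk, in order. -/
def Walk.totalColorSeq (cV : V → α) (cE : Sym2 V → α) {u v : V} (p : G.Walk u v) : List α :=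
  (p.edges.map cE).interleaveAlt (p.support.tail.dropLast.map cV)

/-- A walk is total-proper if in its color sequence, any two entries at distance 1 or 2
are distinct.  This says exactly that adjacent edges get distinct colors, adjacent internal
vertices get distinct colors, and every internal vertex gets a color distinct from those of
its incident edges on the walk. -/
def Walk.IsTotalProper (cV : V → α) (cE : Sym2 V → α) {u v : V} (p : G.Walk u v) : Prop :=
  ∀ i a b, (p.totalColorSeq cV cE)[i]? = some a →
    ((p.totalColorSeq cV cE)[i + 1]? = some b ∨ (p.totalColorSeq cV cE)[i + 2]? = some b) →
    a ≠ b

/-- A total coloring (given by a vertex coloring `cV` and an edge coloring `cE`) makes `G`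
total-proper connected if every two distinct vertices are joined by a total-proper path. -/
def IsTPCColoring (G : SimpleGraph V) (cV : V → α) (cE : Sym2 V → α) : Prop :=
  ∀ u v : V, u ≠ v → ∃ p : G.Walk u v, p.IsPath ∧ p.IsTotalProper cV cE

/-- The total-proper connection number: the minimum number of colors in a total coloring
making `G` total-proper connected. -/
noncomputable def tpc (G : SimpleGraph V) : ℕ :=
  sInf {k | ∃ (cV : V → Fin k) (cE : Sym2 V → Fin k), G.IsTPCColoring cV cE}

end SimpleGraph

/-- The graph `H₁` on `n` vertices: a triangle on vertices `0, 1, 2` together with `n - 3`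
pendant edges attached to vertex `0`. -/
def graphH1 (n : ℕ) : SimpleGraph (Fin n) :=
  SimpleGraph.fromRel
    (fun a b => (a.val < 3 ∧ b.val < 3) ∨ (a.val = 0 ∧ 3 ≤ b.val))

open SimpleGraph

section Helpers

/-! ### Generic list/walk helpers -/

def ListOK {α : Type*} (l : List α) : Prop :=
  ∀ i a b, l[i]? = some a → (l[i + 1]? = some b ∨ l[i + 2]? = some b) → a ≠ b

theorem listOK1 {α : Type*} (a : α) : ListOK [a] := by
  intro i x y hx hy; rcases i with _|i <;> simp_all

theorem listOK3 {α : Type*} (a b c : α) (h1 : a ≠ b) (h2 : a ≠ c) (h3 : b ≠ c) :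
    ListOK [a,b,c] := by
  intro i x y hx hy; rcases i with _|_|_|i <;> rcases hy with hy|hy <;> simp_all

theorem listOK5 {α : Type*} (a b c d e : α) (h1 : a ≠ b) (h2 : a ≠ c) (h3 : b ≠ c)
    (h4 : b ≠ d) (h5 : c ≠ d) (h6 : c ≠ e) (h7 : d ≠ e) : ListOK [a,b,c,d,e] := by
  intro i x y hx hy; rcases i with _|_|_|_|_|i <;> rcases hy with hy|hy <;> simp_all

variable {V : Type*} {α : Type*} {G : SimpleGraph V} (cV : V → α) (cE : Sym2 V → α)

theorem single_path {a b : V} (h : G.Adj a b) :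
    ∃ p : G.Walk a b, p.IsPath ∧ p.IsTotalProper cV cE := by
  refine ⟨Walk.cons h Walk.nil, ?_, ?_⟩
  · simp [Walk.isPath_def, h.ne]
  · have hseq : (Walk.cons h Walk.nil).totalColorSeq cV cE = [cE s(a,b)] := by
      simp [Walk.totalColorSeq, List.interleaveAlt]
    intro i x y hx hy
    rw [hseq] at hx hy
    exact listOK1 _ i x y hx hy

theorem two_path {a c b : V} (h1 : G.Adj a c) (h2 : G.Adj c b) (hab : a ≠ b)
    (e1 : cE s(a,c) ≠ cV c) (e2 : cE s(a,c) ≠ cE s(c,b)) (e3 : cV c ≠ cE s(c,b)) :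
    ∃ p : G.Walk a b, p.IsPath ∧ p.IsTotalProper cV cE := by
  refine ⟨Walk.cons h1 (Walk.cons h2 Walk.nil), ?_, ?_⟩
  · simp [Walk.isPath_def, h1.ne, h2.ne, hab]
  · have hseq : (Walk.cons h1 (Walk.cons h2 Walk.nil)).totalColorSeq cV cE
        = [cE s(a,c), cV c, cE s(c,b)] := by
      simp [Walk.totalColorSeq, List.interleaveAlt]
    intro i x y hx hy
    rw [hseq] at hx hy
    exact listOK3 _ _ _ e1 e2 e3 i x y hx hy

theorem three_path {a c d b : V} (h1 : G.Adj a c) (h2 : G.Adj c d) (h3 : G.Adj d b)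
    (hab : a ≠ b) (had : a ≠ d) (hcb : c ≠ b)
    (e1 : cE s(a,c) ≠ cV c) (e2 : cE s(a,c) ≠ cE s(c,d)) (e3 : cV c ≠ cE s(c,d))
    (e4 : cV c ≠ cV d) (e5 : cE s(c,d) ≠ cV d) (e6 : cE s(c,d) ≠ cE s(d,b))
    (e7 : cV d ≠ cE s(d,b)) :
    ∃ p : G.Walk a b, p.IsPath ∧ p.IsTotalProper cV cE := by
  refine ⟨Walk.cons h1 (Walk.cons h2 (Walk.cons h3 Walk.nil)), ?_, ?_⟩
  · simp [Walk.isPath_def, h1.ne, h2.ne, h3.ne, hab, had, hcb]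
  · have hseq : (Walk.cons h1 (Walk.cons h2 (Walk.cons h3 Walk.nil))).totalColorSeq cV cE
        = [cE s(a,c), cV c, cE s(c,d), cV d, cE s(d,b)] := by
      simp [Walk.totalColorSeq, List.interleaveAlt]
    intro i x y hx hy
    rw [hseq] at hx hy
    exact listOK5 _ _ _ _ _ e1 e2 e3 e4 e5 e6 e7 i x y hx hy

end Helpers

section H1

/-! ### Structure of `graphH1` -/

theorem H1_adj {n : ℕ} (a b : Fin n) : (graphH1 n).Adj a b ↔
    a ≠ b ∧ ((a.val < 3 ∧ b.val < 3) ∨ (a.val = 0 ∧ 3 ≤ b.val) ∨ (b.val = 0 ∧ 3 ≤ a.val)) := by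
  simp [graphH1, SimpleGraph.fromRel_adj]; tauto

theorem H1_adj' {n : ℕ} {a b : Fin n} (h1 : a.val ≠ b.val)
    (h2 : (a.val < 3 ∧ b.val < 3) ∨ (a.val = 0 ∧ 3 ≤ b.val) ∨ (b.val = 0 ∧ 3 ≤ a.val)) :
    (graphH1 n).Adj a b :=
  (H1_adj a b).mpr ⟨fun e => h1 (congrArg Fin.val e), h2⟩

theorem leaf_nbr {n : ℕ} {a b : Fin n} (h : (graphH1 n).Adj a b) (hb : 3 ≤ b.val) :
    a.val = 0 := by
  rw [H1_adj] at h; omega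

theorem zero_mem_support {n : ℕ} (h0 : 0 < n) :
    ∀ {y b' : Fin n} (w : (graphH1 n).Walk y b'), 3 ≤ b'.val → y ≠ b' →
      (⟨0, h0⟩ : Fin n) ∈ w.support := by
  intro y b' w
  induction w with
  | nil => intro _ h; exact absurd rfl h
  | @cons u v w2 h w ih =>
    intro hb' _
    by_cases hu : u.val = 0
    · have : u = ⟨0, h0⟩ := Fin.ext hu
      simp [this]
    · rcases eq_or_ne v w2 with rfl | hv
      · exact absurd (leaf_nbr h hb') hu
      · simp only [Walk.support_cons, List.mem_cons]
        right
        exact ih hb' hv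

theorem forced_path {n : ℕ} {b b' : Fin n} (hb : 3 ≤ b.val) (hb' : 3 ≤ b'.val)
    (hne : b ≠ b') (h0 : 0 < n) (p : (graphH1 n).Walk b b') (hp : p.IsPath) :
    ∃ (h1 : (graphH1 n).Adj b ⟨0, h0⟩) (h2 : (graphH1 n).Adj ⟨0, h0⟩ b'),
      p = Walk.cons h1 (Walk.cons h2 Walk.nil) := by
  cases p with
  | nil => exact absurd rfl hne
  | @cons _ x _ h q =>
    have hx : x = ⟨0, h0⟩ := Fin.ext (leaf_nbr ((graphH1 n).adj_symm h) hb)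
    subst hx
    cases q with
    | nil => simp at hb'
    | @cons _ y _ h' q' =>
      rcases eq_or_ne y b' with rfl | hy
      · have hnil : q' = Walk.nil :=
          Walk.isPath_iff_eq_nil.mp hp.of_cons.of_cons
        subst hnil
        exact ⟨h, h', rfl⟩
      · exfalso
        have hmem := zero_mem_support h0 q' hb' hy
        have hq := hp.of_cons
        rw [Walk.cons_isPath_iff] at hq
        exact hq.2 hmem

/-! ### The coloring -/

def fH (n : ℕ) (h5 : 5 ≤ n) (a b : Fin n) : Fin (n - 2) :=
  if h : a.val = 0 ∨ b.val = 0 then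
    if a.val = 1 ∨ b.val = 1 then ⟨0, by omega⟩
    else if a.val = 2 ∨ b.val = 2 then ⟨1, by omega⟩
    else ⟨a.val + b.val - 3, by
      have ha := a.isLt; have hb := b.isLt
      rcases h with h | h <;> omega⟩
  else ⟨2, by omega⟩

theorem fH_comm (n : ℕ) (h5 : 5 ≤ n) (a b : Fin n) : fH n h5 a b = fH n h5 b a := by
  unfold fH
  by_cases h1 : a.val = 0 ∨ b.val = 0 <;> by_cases h2 : a.val = 1 ∨ b.val = 1 <;>
    by_cases h3 : a.val = 2 ∨ b.val = 2 <;>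
    simp [h1, h2, h3, or_comm, Fin.ext_iff] <;> omega

def cVH (n : ℕ) (h5 : 5 ≤ n) (v : Fin n) : Fin (n - 2) :=
  if v.val = 0 then ⟨n - 3, by omega⟩
  else if v.val = 1 then ⟨1, by omega⟩ else ⟨0, by omega⟩

def cEH (n : ℕ) (h5 : 5 ≤ n) : Sym2 (Fin n) → Fin (n - 2) :=
  Sym2.lift ⟨fun a b => fH n h5 a b, fun a b => fH_comm n h5 a b⟩

theorem cEH_mk (n : ℕ) (h5 : 5 ≤ n) (a b : Fin n) : cEH n h5 s(a,b) = fH n h5 a b :=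
  Sym2.lift_mk _ a b

theorem fH_01 {n : ℕ} {h5 : 5 ≤ n} {a b : Fin n}
    (h : a.val = 0 ∧ b.val = 1 ∨ a.val = 1 ∧ b.val = 0) : (fH n h5 a b).val = 0 := by
  unfold fH; rw [dif_pos (by omega), if_pos (by omega)]

theorem fH_02 {n : ℕ} {h5 : 5 ≤ n} {a b : Fin n}
    (h : a.val = 0 ∧ b.val = 2 ∨ a.val = 2 ∧ b.val = 0) : (fH n h5 a b).val = 1 := by
  unfold fH; rw [dif_pos (by omega), if_neg (by omega), if_pos (by omega)]

theorem fH_12 {n : ℕ} {h5 : 5 ≤ n} {a b : Fin n}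
    (h : a.val = 1 ∧ b.val = 2 ∨ a.val = 2 ∧ b.val = 1) : (fH n h5 a b).val = 2 := by
  unfold fH; rw [dif_neg (by omega)]

theorem fH_0b {n : ℕ} {h5 : 5 ≤ n} {a b : Fin n}
    (h : a.val = 0 ∧ 3 ≤ b.val ∨ b.val = 0 ∧ 3 ≤ a.val) :
    (fH n h5 a b).val = a.val + b.val - 3 := by
  unfold fH; rw [dif_pos (by omega), if_neg (by omega), if_neg (by omega)]

theorem cVH_val {n : ℕ} {h5 : 5 ≤ n} (v : Fin n) :
    (cVH n h5 v).val = if v.val = 0 then n - 3 else if v.val = 1 then 1 else 0 := by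
  unfold cVH; split_ifs <;> rfl

/-! ### The coloring works -/

theorem coloring_works (n : ℕ) (h5 : 5 ≤ n) :
    (graphH1 n).IsTPCColoring (cVH n h5) (cEH n h5) := by
  intro u v huv
  have hval : u.val ≠ v.val := fun e => huv (Fin.ext e)
  have hu := u.isLt
  have hv := v.isLt
  set z0 : Fin n := ⟨0, by omega⟩ with hz0
  set z1 : Fin n := ⟨1, by omega⟩ with hz1
  set z2 : Fin n := ⟨2, by omega⟩ with hz2
  -- tactic for color inequalities
  by_cases hu3 : u.val < 3
  · by_cases hv3 : v.val < 3
    · -- both in triangle: adjacent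
      exact single_path _ _ (H1_adj' hval (Or.inl ⟨hu3, hv3⟩))
    · push_neg at hv3
      -- v is a leaf
      rcases (by omega : u.val = 0 ∨ u.val = 1 ∨ u.val = 2) with hu0 | hu1 | hu2
      · exact single_path _ _ (H1_adj' hval (Or.inr (Or.inl ⟨hu0, hv3⟩)))
      · -- u = 1
        by_cases hv4 : v.val = 3
        · -- path 1 - 2 - 0 - v
          refine three_path _ _ (H1_adj' (a := u) (b := z2) (by simp [hz2]; omega)
              (by simp [hz2]; omega))
            (H1_adj' (a := z2) (b := z0) (by simp [hz0, hz2]) (by simp [hz0, hz2]))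
            (H1_adj' (a := z0) (b := v) (by simp [hz0]; omega) (by simp [hz0]; omega))
            huv (Fin.ne_of_val_ne (by simp [hz0]; omega))
            (Fin.ne_of_val_ne (by simp [hz2]; omega)) ?_ ?_ ?_ ?_ ?_ ?_ ?_
          · exact Fin.ne_of_val_ne (by
              rw [cEH_mk, fH_12 (Or.inl ⟨hu1, rfl⟩), cVH_val]; simp [hz2])
          · exact Fin.ne_of_val_ne (by
              rw [cEH_mk, cEH_mk, fH_12 (Or.inl ⟨hu1, rfl⟩), fH_02 (Or.inr ⟨rfl, rfl⟩)]; omega)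
          · exact Fin.ne_of_val_ne (by
              rw [cVH_val, cEH_mk, fH_02 (Or.inr ⟨rfl, rfl⟩)]; simp [hz2])
          · exact Fin.ne_of_val_ne (by
              rw [cVH_val, cVH_val]; simp [hz0, hz2]; omega)
          · exact Fin.ne_of_val_ne (by
              rw [cEH_mk, fH_02 (Or.inr ⟨rfl, rfl⟩), cVH_val]; simp [hz0]; omega)
          · exact Fin.ne_of_val_ne (by
              rw [cEH_mk, cEH_mk, fH_02 (Or.inr ⟨rfl, rfl⟩), fH_0b (Or.inl ⟨rfl, hv3⟩)]
              simp [hz0]; omega)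
          · exact Fin.ne_of_val_ne (by
              rw [cVH_val, cEH_mk, fH_0b (Or.inl ⟨rfl, hv3⟩)]; simp [hz0]; omega)
        · -- path 1 - 0 - v
          refine two_path _ _ (H1_adj' (a := u) (b := z0) (by simp [hz0]; omega)
              (by simp [hz0]; omega))
            (H1_adj' (a := z0) (b := v) (by simp [hz0]; omega) (by simp [hz0]; omega))
            huv ?_ ?_ ?_
          · exact Fin.ne_of_val_ne (by
              rw [cEH_mk, fH_01 (Or.inr ⟨hu1, rfl⟩), cVH_val]; simp [hz0]; omega)
          · exact Fin.ne_of_val_ne (by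
              rw [cEH_mk, cEH_mk, fH_01 (Or.inr ⟨hu1, rfl⟩), fH_0b (Or.inl ⟨rfl, hv3⟩)]
              simp [hz0]; omega)
          · exact Fin.ne_of_val_ne (by
              rw [cVH_val, cEH_mk, fH_0b (Or.inl ⟨rfl, hv3⟩)]; simp [hz0]; omega)
      · -- u = 2
        by_cases hv4 : v.val = 4
        · -- path 2 - 1 - 0 - v
          refine three_path _ _ (H1_adj' (a := u) (b := z1) (by simp [hz1]; omega)
              (by simp [hz1]; omega))
            (H1_adj' (a := z1) (b := z0) (by simp [hz0, hz1]) (by simp [hz0, hz1]))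
            (H1_adj' (a := z0) (b := v) (by simp [hz0]; omega) (by simp [hz0]; omega))
            huv (Fin.ne_of_val_ne (by simp [hz0]; omega))
            (Fin.ne_of_val_ne (by simp [hz1]; omega)) ?_ ?_ ?_ ?_ ?_ ?_ ?_
          · exact Fin.ne_of_val_ne (by
              rw [cEH_mk, fH_12 (Or.inr ⟨hu2, rfl⟩), cVH_val]; simp [hz1])
          · exact Fin.ne_of_val_ne (by
              rw [cEH_mk, cEH_mk, fH_12 (Or.inr ⟨hu2, rfl⟩), fH_01 (Or.inr ⟨rfl, rfl⟩)]; omega)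
          · exact Fin.ne_of_val_ne (by
              rw [cVH_val, cEH_mk, fH_01 (Or.inr ⟨rfl, rfl⟩)]; simp [hz1])
          · exact Fin.ne_of_val_ne (by
              rw [cVH_val, cVH_val]; simp [hz0, hz1]; omega)
          · exact Fin.ne_of_val_ne (by
              rw [cEH_mk, fH_01 (Or.inr ⟨rfl, rfl⟩), cVH_val]; simp [hz0]; omega)
          · exact Fin.ne_of_val_ne (by
              rw [cEH_mk, cEH_mk, fH_01 (Or.inr ⟨rfl, rfl⟩), fH_0b (Or.inl ⟨rfl, hv3⟩)]
              simp [hz0]; omega)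
          · exact Fin.ne_of_val_ne (by
              rw [cVH_val, cEH_mk, fH_0b (Or.inl ⟨rfl, hv3⟩)]; simp [hz0]; omega)
        · -- path 2 - 0 - v
          refine two_path _ _ (H1_adj' (a := u) (b := z0) (by simp [hz0]; omega)
              (by simp [hz0]; omega))
            (H1_adj' (a := z0) (b := v) (by simp [hz0]; omega) (by simp [hz0]; omega))
            huv ?_ ?_ ?_
          · exact Fin.ne_of_val_ne (by
              rw [cEH_mk, fH_02 (Or.inr ⟨hu2, rfl⟩), cVH_val]; simp [hz0]; omega)
          · exact Fin.ne_of_val_ne (by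
              rw [cEH_mk, cEH_mk, fH_02 (Or.inr ⟨hu2, rfl⟩), fH_0b (Or.inl ⟨rfl, hv3⟩)]
              simp [hz0]; omega)
          · exact Fin.ne_of_val_ne (by
              rw [cVH_val, cEH_mk, fH_0b (Or.inl ⟨rfl, hv3⟩)]; simp [hz0]; omega)
  · push_neg at hu3
    -- u is a leaf
    by_cases hv3 : v.val < 3
    · rcases (by omega : v.val = 0 ∨ v.val = 1 ∨ v.val = 2) with hv0 | hv1 | hv2
      · exact single_path _ _ (H1_adj' hval (Or.inr (Or.inr ⟨hv0, hu3⟩)))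
      · -- v = 1
        by_cases hu4 : u.val = 3
        · -- path u - 0 - 2 - 1
          refine three_path _ _ (H1_adj' (a := u) (b := z0) (by simp [hz0]; omega)
              (by simp [hz0]; omega))
            (H1_adj' (a := z0) (b := z2) (by simp [hz0, hz2]) (by simp [hz0, hz2]))
            (H1_adj' (a := z2) (b := v) (by simp [hz2]; omega) (by simp [hz2]; omega))
            huv (Fin.ne_of_val_ne (by simp [hz2]; omega))
            (Fin.ne_of_val_ne (by simp [hz0]; omega)) ?_ ?_ ?_ ?_ ?_ ?_ ?_
          · exact Fin.ne_of_val_ne (by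
              rw [cEH_mk, fH_0b (Or.inr ⟨rfl, hu3⟩), cVH_val]; simp [hz0]; omega)
          · exact Fin.ne_of_val_ne (by
              rw [cEH_mk, cEH_mk, fH_0b (Or.inr ⟨rfl, hu3⟩), fH_02 (Or.inl ⟨rfl, rfl⟩)]
              simp [hz0]; omega)
          · exact Fin.ne_of_val_ne (by
              rw [cVH_val, cEH_mk, fH_02 (Or.inl ⟨rfl, rfl⟩)]; simp [hz0]; omega)
          · exact Fin.ne_of_val_ne (by
              rw [cVH_val, cVH_val]; simp [hz0, hz2]; omega)
          · exact Fin.ne_of_val_ne (by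
              rw [cEH_mk, fH_02 (Or.inl ⟨rfl, rfl⟩), cVH_val]; simp [hz2])
          · exact Fin.ne_of_val_ne (by
              rw [cEH_mk, cEH_mk, fH_02 (Or.inl ⟨rfl, rfl⟩), fH_12 (Or.inr ⟨rfl, hv1⟩)]; omega)
          · exact Fin.ne_of_val_ne (by
              rw [cVH_val, cEH_mk, fH_12 (Or.inr ⟨rfl, hv1⟩)]; simp [hz2])
        · -- path u - 0 - 1
          refine two_path _ _ (H1_adj' (a := u) (b := z0) (by simp [hz0]; omega)
              (by simp [hz0]; omega))
            (H1_adj' (a := z0) (b := v) (by simp [hz0]; omega) (by simp [hz0]; omega))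
            huv ?_ ?_ ?_
          · exact Fin.ne_of_val_ne (by
              rw [cEH_mk, fH_0b (Or.inr ⟨rfl, hu3⟩), cVH_val]; simp [hz0]; omega)
          · exact Fin.ne_of_val_ne (by
              rw [cEH_mk, cEH_mk, fH_0b (Or.inr ⟨rfl, hu3⟩), fH_01 (Or.inl ⟨rfl, hv1⟩)]
              simp [hz0]; omega)
          · exact Fin.ne_of_val_ne (by
              rw [cVH_val, cEH_mk, fH_01 (Or.inl ⟨rfl, hv1⟩)]; simp [hz0]; omega)
      · -- v = 2
        by_cases hu4 : u.val = 4
        · -- path u - 0 - 1 - 2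
          refine three_path _ _ (H1_adj' (a := u) (b := z0) (by simp [hz0]; omega)
              (by simp [hz0]; omega))
            (H1_adj' (a := z0) (b := z1) (by simp [hz0, hz1]) (by simp [hz0, hz1]))
            (H1_adj' (a := z1) (b := v) (by simp [hz1]; omega) (by simp [hz1]; omega))
            huv (Fin.ne_of_val_ne (by simp [hz1]; omega))
            (Fin.ne_of_val_ne (by simp [hz0]; omega)) ?_ ?_ ?_ ?_ ?_ ?_ ?_
          · exact Fin.ne_of_val_ne (by
              rw [cEH_mk, fH_0b (Or.inr ⟨rfl, hu3⟩), cVH_val]; simp [hz0]; omega)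
          · exact Fin.ne_of_val_ne (by
              rw [cEH_mk, cEH_mk, fH_0b (Or.inr ⟨rfl, hu3⟩), fH_01 (Or.inl ⟨rfl, rfl⟩)]
              simp [hz0]; omega)
          · exact Fin.ne_of_val_ne (by
              rw [cVH_val, cEH_mk, fH_01 (Or.inl ⟨rfl, rfl⟩)]; simp [hz0]; omega)
          · exact Fin.ne_of_val_ne (by
              rw [cVH_val, cVH_val]; simp [hz0, hz1]; omega)
          · exact Fin.ne_of_val_ne (by
              rw [cEH_mk, fH_01 (Or.inl ⟨rfl, rfl⟩), cVH_val]; simp [hz1])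
          · exact Fin.ne_of_val_ne (by
              rw [cEH_mk, cEH_mk, fH_01 (Or.inl ⟨rfl, rfl⟩), fH_12 (Or.inl ⟨rfl, hv2⟩)]; omega)
          · exact Fin.ne_of_val_ne (by
              rw [cVH_val, cEH_mk, fH_12 (Or.inl ⟨rfl, hv2⟩)]; simp [hz1])
        · -- path u - 0 - 2
          refine two_path _ _ (H1_adj' (a := u) (b := z0) (by simp [hz0]; omega)
              (by simp [hz0]; omega))
            (H1_adj' (a := z0) (b := v) (by simp [hz0]; omega) (by simp [hz0]; omega))
            huv ?_ ?_ ?_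
          · exact Fin.ne_of_val_ne (by
              rw [cEH_mk, fH_0b (Or.inr ⟨rfl, hu3⟩), cVH_val]; simp [hz0]; omega)
          · exact Fin.ne_of_val_ne (by
              rw [cEH_mk, cEH_mk, fH_0b (Or.inr ⟨rfl, hu3⟩), fH_02 (Or.inl ⟨rfl, hv2⟩)]
              simp [hz0]; omega)
          · exact Fin.ne_of_val_ne (by
              rw [cVH_val, cEH_mk, fH_02 (Or.inl ⟨rfl, hv2⟩)]; simp [hz0]; omega)
    · push_neg at hv3
      -- both leaves: path u - 0 - v
      refine two_path _ _ (H1_adj' (a := u) (b := z0) (by simp [hz0]; omega)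
          (by simp [hz0]; omega))
        (H1_adj' (a := z0) (b := v) (by simp [hz0]; omega) (by simp [hz0]; omega))
        huv ?_ ?_ ?_
      · exact Fin.ne_of_val_ne (by
          rw [cEH_mk, fH_0b (Or.inr ⟨rfl, hu3⟩), cVH_val]; simp [hz0]; omega)
      · exact Fin.ne_of_val_ne (by
          rw [cEH_mk, cEH_mk, fH_0b (Or.inr ⟨rfl, hu3⟩), fH_0b (Or.inl ⟨rfl, hv3⟩)]
          simp [hz0]; omega)
      · exact Fin.ne_of_val_ne (by
          rw [cVH_val, cEH_mk, fH_0b (Or.inl ⟨rfl, hv3⟩)]; simp [hz0]; omega)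

end H1
open SimpleGraph in
theorem tpc_H1 (n : ℕ) (h5 : 5 ≤ n) : (graphH1 n).tpc = n - 2 := by
  have h0 : 0 < n := by omega
  have hmem : n - 2 ∈ {k | ∃ (cV : Fin n → Fin k) (cE : Sym2 (Fin n) → Fin k),
      (graphH1 n).IsTPCColoring cV cE} := ⟨cVH n h5, cEH n h5, coloring_works n h5⟩
  apply le_antisymm
  · exact Nat.sInf_le hmem
  · apply le_csInf ⟨n - 2, hmem⟩
    rintro k ⟨cV, cE, hc⟩
    have key : ∀ b b' : Fin n, 3 ≤ b.val → 3 ≤ b'.val → b ≠ b' →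
        cE s((⟨0, h0⟩ : Fin n), b) ≠ cV ⟨0, h0⟩ ∧
          cE s((⟨0, h0⟩ : Fin n), b) ≠ cE s((⟨0, h0⟩ : Fin n), b') := by
      intro b b' hb hb' hne
      obtain ⟨p, hp, htp⟩ := hc b b' hne
      obtain ⟨h1, h2, rfl⟩ := forced_path hb hb' hne h0 p hp
      have hseq : (Walk.cons h1 (Walk.cons h2 Walk.nil)).totalColorSeq cV cE
          = [cE s(b, ⟨0, h0⟩), cV ⟨0, h0⟩, cE s((⟨0, h0⟩ : Fin n), b')] := by
        simp [Walk.totalColorSeq, List.interleaveAlt]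
      have hswap : s(b, (⟨0, h0⟩ : Fin n)) = s((⟨0, h0⟩ : Fin n), b) := Sym2.eq_swap
      constructor
      · have := htp 0 (cE s(b, ⟨0, h0⟩)) (cV ⟨0, h0⟩) (by simp [hseq])
          (Or.inl (by simp [hseq]))
        rwa [hswap] at this
      · have := htp 0 (cE s(b, ⟨0, h0⟩)) (cE s((⟨0, h0⟩ : Fin n), b')) (by simp [hseq])
          (Or.inr (by simp [hseq]))
        rwa [hswap] at this
    have inj : Function.Injective (fun i : Fin (n - 2) =>
        if h : i.val < n - 3 then cE s((⟨0, h0⟩ : Fin n), ⟨i.val + 3, by omega⟩)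
        else cV ⟨0, h0⟩) := by
      intro i j hij
      simp only at hij
      have hi2 := i.isLt
      have hj2 := j.isLt
      by_cases hi : i.val < n - 3 <;> by_cases hj : j.val < n - 3
      · rw [dif_pos hi, dif_pos hj] at hij
        by_contra hne
        have hne' : (⟨i.val + 3, by omega⟩ : Fin n) ≠ ⟨j.val + 3, by omega⟩ :=
          Fin.ne_of_val_ne (by simp only [Fin.val_mk]; omega)
        exact (key _ _ (by simp) (by simp) hne').2 hij
      · rw [dif_pos hi, dif_neg hj] at hij
        exfalso
        by_cases hi0 : i.val = 0
        · exact (key ⟨i.val + 3, by omega⟩ ⟨4, by omega⟩ (by simp) (by simp)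
            (Fin.ne_of_val_ne (by simp only [Fin.val_mk]; omega))).1 hij
        · exact (key ⟨i.val + 3, by omega⟩ ⟨3, by omega⟩ (by simp) (by simp)
            (Fin.ne_of_val_ne (by simp only [Fin.val_mk]; omega))).1 hij
      · rw [dif_neg hi, dif_pos hj] at hij
        exfalso
        by_cases hj0 : j.val = 0
        · exact (key ⟨j.val + 3, by omega⟩ ⟨4, by omega⟩ (by simp) (by simp)
            (Fin.ne_of_val_ne (by simp only [Fin.val_mk]; omega))).1 hij.symm
        · exact (key ⟨j.val + 3, by omega⟩ ⟨3, by omega⟩ (by simp) (by simp)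
            (Fin.ne_of_val_ne (by simp only [Fin.val_mk]; omega))).1 hij.symm
      · exact Fin.ext (by omega)
    calc n - 2 = Fintype.card (Fin (n - 2)) := by simp
      _ ≤ Fintype.card (Fin k) := Fintype.card_le_of_injective _ inj
      _ = k := by simp
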